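/- A Toeplitz operator T_φ on H² that is an orthogonal projection (T_φ = T_φ* = T_φ²) must be 0 or the identity I. -/

import Mathlib

open MeasureTheory Complex AddCircle
open scoped ENNReal ComplexConjugate InnerProductSpace

noncomputable section

namespace ToeplitzProj

instance : Fact (0 < 2 * Real.pi) := ⟨by positivity⟩
instance : Fact ((1:ℝ≥0∞) ≤ ⊤) := ⟨le_top⟩

abbrev 𝕋 : Type := AddCircle (2 * Real.pi)
abbrev μT : Measure 𝕋 := haarAddCircle
abbrev L2 : Type := Lp ℂ 2 μT
abbrev Linf : Type := Lp ℂ ⊤ μT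

/-- The rank-one operator `f ⊗ g`, acting by `h ↦ ⟨h, g⟩ f = ⟪g, h⟫ • f`. -/
def rankOne {H : Type*} [NormedAddCommGroup H] [InnerProductSpace ℂ H] (f g : H) :
    H →L[ℂ] H := (innerSL ℂ g).smulRight f

theorem memLp_conj (h : L2) : MemLp (fun x => conj ((h : 𝕋 → ℂ) x)) 2 μT :=
  ⟨RCLike.continuous_conj.comp_aestronglyMeasurable (Lp.memLp h).1,
    by
      rw [show (fun x => conj ((h : 𝕋 → ℂ) x)) = conj (h : 𝕋 → ℂ) from rfl, eLpNorm_conj]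
      exact (Lp.memLp h).2⟩

/-- Pointwise complex conjugation on `L²`. -/
def conjL2 (h : L2) : L2 := (memLp_conj h).toLp _

theorem memLp_mul (φ : Linf) (f : L2) :
    MemLp ((φ : 𝕋 → ℂ) • (f : 𝕋 → ℂ)) 2 μT :=
  (Lp.memLp f).smul (p := ⊤) (Lp.memLp φ)

/-- Multiplication by an `L^∞` function, as a bounded operator on `L²`. -/
def mulCLM (φ : Linf) : L2 →L[ℂ] L2 :=
  LinearMap.mkContinuous
    { toFun := fun f => (memLp_mul φ f).toLp _
      map_add' := by
        intro f g
        rw [← MemLp.toLp_add (memLp_mul φ f) (memLp_mul φ g)]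
        apply MemLp.toLp_congr
        filter_upwards [Lp.coeFn_add f g] with x hx
        simp only [Pi.smul_apply, smul_eq_mul, Pi.mul_apply, hx, Pi.add_apply, mul_add]
      map_smul' := by
        intro c f
        show (memLp_mul φ (c • f)).toLp _ = c • (memLp_mul φ f).toLp _
        rw [← MemLp.toLp_const_smul c (memLp_mul φ f)]
        apply MemLp.toLp_congr
        filter_upwards [Lp.coeFn_smul c f] with x hx
        simp only [Pi.smul_apply, smul_eq_mul, Pi.mul_apply, hx]
        ring }
    ‖φ‖
    (by
      intro f
      simp only [LinearMap.coe_mk, AddHom.coe_mk]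
      rw [Lp.norm_toLp]
      have h := eLpNorm_smul_le_mul_eLpNorm (p := ⊤) (q := 2) (r := 2) (Lp.memLp f).1 (Lp.memLp φ).1
      calc (eLpNorm ((φ : 𝕋 → ℂ) • (f : 𝕋 → ℂ)) 2 μT).toReal
          ≤ (eLpNorm (φ : 𝕋 → ℂ) ⊤ μT * eLpNorm (f : 𝕋 → ℂ) 2 μT).toReal := by
            exact ENNReal.toReal_mono (by
              exact ENNReal.mul_ne_top (Lp.memLp φ).2.ne (Lp.memLp f).2.ne) h
        _ = ‖φ‖ * ‖f‖ := by
            rw [ENNReal.toReal_mul, Lp.norm_def, Lp.norm_def])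

/-- The Hardy space `H²` as a subspace of `L²`: the functions whose negative Fourier
coefficients vanish. -/
def Hardy : Submodule ℂ L2 where
  carrier := {f : L2 | ∀ n : ℤ, n < 0 → ⟪(fourierLp 2 n : L2), f⟫_ℂ = 0}
  add_mem' := by
    intro a b ha hb n hn
    rw [inner_add_right, ha n hn, hb n hn, add_zero]
  zero_mem' := by
    intro n hn
    exact inner_zero_right _
  smul_mem' := by
    intro c a ha n hn
    rw [inner_smul_right, ha n hn, mul_zero]

theorem isClosed_Hardy : IsClosed (Hardy : Set L2) := by
  have : (Hardy : Set L2)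
      = ⋂ n : ℤ, ⋂ _ : n < 0, {f : L2 | ⟪(fourierLp 2 n : L2), f⟫_ℂ = 0} := by
    ext f
    simp only [Set.mem_iInter, Set.mem_setOf_eq, SetLike.mem_coe]
    exact Iff.rfl
  rw [this]
  exact isClosed_iInter fun n => isClosed_iInter fun _ =>
    isClosed_eq (Continuous.inner continuous_const continuous_id) continuous_const

instance : CompleteSpace Hardy := isClosed_Hardy.completeSpace_coe

/-- Inclusion of the Hardy space into `L²`. -/
def inclH : Hardy →L[ℂ] L2 := Hardy.subtypeL

/-- The Riesz projection `P : L² → H²`. -/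
def projH : L2 →L[ℂ] Hardy := Hardy.orthogonalProjectionOnto

/-- The Riesz projection, viewed as an operator `L² → L²`. -/
def PFull : L2 →L[ℂ] L2 := inclH ∘L projH

/-- The Toeplitz operator `T_φ f = P(φ f)` on the Hardy space. -/
def Toep (φ : Linf) : Hardy →L[ℂ] Hardy := projH ∘L mulCLM φ ∘L inclH

/-- The Hankel operator `H_φ f = (I − P)(φ f)`, mapping `H²` into `L²`. -/
def Hank (φ : Linf) : Hardy →L[ℂ] L2 := (mulCLM φ ∘L inclH) - (inclH ∘L Toep φ)

/-- A continuous map on the circle, as an element of `L^∞`. -/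
def cLinf (g : C(𝕋, ℂ)) : Linf := ContinuousMap.toLp (E := ℂ) ⊤ μT ℂ g

/-- The coordinate function `z = e^{ix}` in `L^∞`. -/
def zL : Linf := cLinf (fourier 1)

/-- The conjugate coordinate function `z̄ = e^{-ix}` in `L^∞`. -/
def zbarL : Linf := cLinf (fourier (-1))

/-- The constant function `c` in `L^∞`. -/
def constL (c : ℂ) : Linf := cLinf (ContinuousMap.const _ c)

/-- An `L^∞` function, viewed as an element of `L²` (the measure is finite). -/
def toL2 (φ : Linf) : L2 :=
  ((Lp.memLp φ).mono_exponent (le_top : (2:ℝ≥0∞) ≤ ⊤)).toLp φ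

/-- The constant function `1`, as an element of the Hardy space. -/
def oneH : Hardy :=
  ⟨(fourierLp 2 0 : L2), fun n hn => orthonormal_fourier.2 (show n ≠ 0 from hn.ne)⟩

/-- The anti-unitary operator `V` on `L²`, `(Vh)(w) = w̄ · conj (h w)`. -/
def Vop (h : L2) : L2 := mulCLM zbarL (conjL2 h)

/-- `φ ∈ L^∞` is an inner function: `φ ∈ H²` and `|φ| = 1` a.e. -/
def IsInnerFn (u : Linf) : Prop :=
  toL2 u ∈ Hardy ∧ ∀ᵐ x ∂μT, ‖(u : 𝕋 → ℂ) x‖ = 1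

/-- `φ ∈ L^∞` is nonconstant (as an a.e. class). -/
def Nonconst (u : Linf) : Prop := ¬ ∃ c : ℂ, (u : 𝕋 → ℂ) =ᵐ[μT] fun _ => c

/-- `Q` is an orthogonal projection: self-adjoint and idempotent. -/
def IsOrthoProj {H : Type*} [NormedAddCommGroup H] [InnerProductSpace ℂ H]
    [CompleteSpace H] (Q : H →L[ℂ] H) : Prop :=
  IsSelfAdjoint Q ∧ Q ∘L Q = Q

theorem memLinf_conj (φ : Linf) : MemLp (fun x => conj ((φ : 𝕋 → ℂ) x)) ⊤ μT :=
  ⟨RCLike.continuous_conj.comp_aestronglyMeasurable (Lp.memLp φ).1,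
    by
      rw [show (fun x => conj ((φ : 𝕋 → ℂ) x)) = conj (φ : 𝕋 → ℂ) from rfl, eLpNorm_conj]
      exact (Lp.memLp φ).2⟩

/-- Pointwise complex conjugation on `L^∞`. -/
def conjLinf (φ : Linf) : Linf := (memLinf_conj φ).toLp _

/-- The pointwise product of two `L^∞` functions. -/
def mulLinf (φ ψ : Linf) : Linf :=
  (((Lp.memLp ψ).smul (p := ⊤) (Lp.memLp φ)) :
    MemLp ((φ : 𝕋 → ℂ) • (ψ : 𝕋 → ℂ)) ⊤ μT).toLp _

/-- The Hankel operator `H_φ = (I − P) M_φ P`, as an operator on all of `L²`. -/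
def HankFull (φ : Linf) : L2 →L[ℂ] L2 := (1 - PFull) ∘L mulCLM φ ∘L PFull

theorem inner_L2_eq (f g : L2) :
    ⟪f, g⟫_ℂ = ∫ x, conj ((f : 𝕋 → ℂ) x) * (g : 𝕋 → ℂ) x ∂μT := by
  rw [MeasureTheory.L2.inner_def]
  simp_rw [RCLike.inner_apply]
  exact integral_congr_ae (Filter.Eventually.of_forall fun x => mul_comm _ _)

theorem mulCLM_apply (φ : Linf) (f : L2) : mulCLM φ f = (memLp_mul φ f).toLp _ := rfl

theorem coeFn_mul (φ : Linf) (f : L2) :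
    (mulCLM φ f : 𝕋 → ℂ) =ᵐ[μT] fun x => (φ : 𝕋 → ℂ) x * (f : 𝕋 → ℂ) x := by
  rw [mulCLM_apply]
  filter_upwards [MemLp.coeFn_toLp (memLp_mul φ f)] with x hx
  simpa using hx

theorem coeFn_zL : (zL : 𝕋 → ℂ) =ᵐ[μT] fun x => fourier 1 x :=
  ContinuousMap.coeFn_toLp (p := (⊤ : ℝ≥0∞)) μT (𝕜 := ℂ) (fourier 1)

theorem coeFn_zbarL : (zbarL : 𝕋 → ℂ) =ᵐ[μT] fun x => fourier (-1) x :=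
  ContinuousMap.coeFn_toLp (p := (⊤ : ℝ≥0∞)) μT (𝕜 := ℂ) (fourier (-1))

theorem conj_fourier_mul_z (n : ℤ) (x : 𝕋) :
    conj (fourier n x) * fourier 1 x = conj (fourier (n - 1) x) := by
  rw [← fourier_neg, ← fourier_neg, ← fourier_add, show -n + 1 = -(n - 1) by ring]

theorem conj_fourier_mul_zbar (n : ℤ) (x : 𝕋) :
    conj (fourier n x) * fourier (-1) x = conj (fourier (n + 1) x) := by
  rw [← fourier_neg, ← fourier_neg, ← fourier_add, show -n + -1 = -(n + 1) by ring]

theorem conj_z_mul_z (x : 𝕋) : conj (fourier 1 x) * fourier 1 x = 1 := by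
  rw [← fourier_neg, ← fourier_add]
  norm_num [fourier_zero]

theorem inner_fourier_Mz (n : ℤ) (f : L2) :
    ⟪(fourierLp 2 n : L2), mulCLM zL f⟫_ℂ = ⟪(fourierLp 2 (n - 1) : L2), f⟫_ℂ := by
  rw [inner_L2_eq, inner_L2_eq]
  apply integral_congr_ae
  filter_upwards [coeFn_fourierLp 2 n, coeFn_fourierLp 2 (n - 1), coeFn_mul zL f,
    coeFn_zL] with x h1 h2 h3 h4
  rw [h1, h2, h3, h4, ← conj_fourier_mul_z]
  ring

theorem inner_fourier_Mzb (n : ℤ) (f : L2) :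
    ⟪(fourierLp 2 n : L2), mulCLM zbarL f⟫_ℂ = ⟪(fourierLp 2 (n + 1) : L2), f⟫_ℂ := by
  rw [inner_L2_eq, inner_L2_eq]
  apply integral_congr_ae
  filter_upwards [coeFn_fourierLp 2 n, coeFn_fourierLp 2 (n + 1), coeFn_mul zbarL f,
    coeFn_zbarL] with x h1 h2 h3 h4
  rw [h1, h2, h3, h4, ← conj_fourier_mul_zbar]
  ring

theorem Mz_inner_Mz (f g : L2) : ⟪mulCLM zL f, mulCLM zL g⟫_ℂ = ⟪f, g⟫_ℂ := by
  rw [inner_L2_eq, inner_L2_eq]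
  apply integral_congr_ae
  filter_upwards [coeFn_mul zL f, coeFn_mul zL g, coeFn_zL] with x h1 h2 h3
  rw [h1, h2, h3]
  have hz := conj_z_mul_z x
  simp only [map_mul]
  linear_combination (conj ((f : 𝕋 → ℂ) x) * (g : 𝕋 → ℂ) x) * hz

theorem Mzb_inner_left (f g : L2) : ⟪mulCLM zbarL f, g⟫_ℂ = ⟪f, mulCLM zL g⟫_ℂ := by
  rw [inner_L2_eq, inner_L2_eq]
  apply integral_congr_ae
  filter_upwards [coeFn_mul zbarL f, coeFn_mul zL g, coeFn_zL, coeFn_zbarL] with x h1 h2 h3 h4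
  rw [h1, h2, h3, h4]
  simp only [map_mul, fourier_neg, RingHom.id_apply, starRingEnd_self_apply]
  ring

theorem fourierLp_mem_Hardy {n : ℤ} (hn : 0 ≤ n) : (fourierLp 2 n : L2) ∈ Hardy := by
  intro m hm
  rw [orthonormal_iff_ite.mp orthonormal_fourier m n, if_neg (by omega)]

theorem Mz_mem_Hardy {f : L2} (hf : f ∈ Hardy) : mulCLM zL f ∈ Hardy := by
  intro n hn
  rw [inner_fourier_Mz]
  exact hf (n - 1) (by omega)

theorem Toep_inner (φ : Linf) (h g : Hardy) :
    ⟪Toep φ h, g⟫_ℂ = ⟪mulCLM φ (h : L2), (g : L2)⟫_ℂ := by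
  show ⟪Hardy.orthogonalProjectionOnto (mulCLM φ (h : L2)), g⟫_ℂ = _
  exact Submodule.inner_orthogonalProjectionOnto_eq_of_mem_right (K := Hardy) g (mulCLM φ (h : L2))

theorem coe_S_apply (h : Hardy) : ((Toep zL h : Hardy) : L2) = mulCLM zL (h : L2) := by
  show (Hardy.orthogonalProjectionOnto (mulCLM zL (h : L2)) : L2) = _
  exact Submodule.starProjection_eq_self_iff.mpr (Mz_mem_Hardy h.2)

theorem coeff_S_succ (n : ℤ) (h : Hardy) :
    ⟪(fourierLp 2 n : L2), ((Toep zL h : Hardy) : L2)⟫_ℂ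
      = ⟪(fourierLp 2 (n - 1) : L2), (h : L2)⟫_ℂ := by
  rw [coe_S_apply, inner_fourier_Mz]

theorem coeff_Sd (n : ℤ) (hn : 0 ≤ n) (h : Hardy) :
    ⟪(fourierLp 2 n : L2), ((Toep zbarL h : Hardy) : L2)⟫_ℂ
      = ⟪(fourierLp 2 (n + 1) : L2), (h : L2)⟫_ℂ := by
  have h1 : ⟪(fourierLp 2 n : L2), ((Toep zbarL h : Hardy) : L2)⟫_ℂ
      = ⟪(fourierLp 2 n : L2), mulCLM zbarL (h : L2)⟫_ℂ := by
    have := Submodule.inner_orthogonalProjectionOnto_eq_of_mem_left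
      (K := Hardy) (⟨fourierLp 2 n, fourierLp_mem_Hardy hn⟩ : Hardy) (mulCLM zbarL (h : L2))
    rw [Submodule.coe_inner] at this
    exact this
  rw [h1, inner_fourier_Mzb]

theorem quad_eq (φ : Linf) (h : Hardy) :
    ⟪Toep φ (Toep zL h), Toep zL h⟫_ℂ = ⟪Toep φ h, h⟫_ℂ := by
  rw [Toep_inner, Toep_inner, coe_S_apply]
  rw [inner_L2_eq, inner_L2_eq]
  apply integral_congr_ae
  filter_upwards [coeFn_mul φ (mulCLM zL (h : L2)), coeFn_mul zL (h : L2), coeFn_zL,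
    coeFn_mul φ (h : L2)] with x h1 h2 h3 h4
  rw [h1, h2, h3, h4]
  have hz := conj_z_mul_z x
  simp only [map_mul]
  linear_combination (conj ((φ : 𝕋 → ℂ) x) * conj ((h : L2) x) * ((h : L2) x)) * hz

theorem S_inner_S (h g : Hardy) : ⟪Toep zL h, Toep zL g⟫_ℂ = ⟪h, g⟫_ℂ := by
  rw [Submodule.coe_inner, Submodule.coe_inner, coe_S_apply, coe_S_apply, Mz_inner_Mz]

theorem Sd_adjoint (h g : Hardy) : ⟪Toep zbarL h, g⟫_ℂ = ⟪h, Toep zL g⟫_ℂ := by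
  rw [Toep_inner, Submodule.coe_inner, coe_S_apply, Mzb_inner_left]

theorem Mz_fourier (n : ℤ) :
    mulCLM zL (fourierLp 2 n : L2) = (fourierLp 2 (n + 1) : L2) := by
  apply MeasureTheory.Lp.ext
  filter_upwards [coeFn_mul zL (fourierLp 2 n : L2), coeFn_zL, coeFn_fourierLp 2 n,
    coeFn_fourierLp 2 (n + 1)] with x h1 h2 h3 h4
  rw [h1, h2, h3, h4, ← fourier_add, add_comm]

theorem eq_zero_of_forall_inner_fourier (v : L2)
    (hv : ∀ n : ℤ, ⟪(fourierLp 2 n : L2), v⟫_ℂ = 0) : v = 0 := by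
  have h0 : fourierBasis.repr v = 0 := by
    ext n
    rw [HilbertBasis.repr_apply_apply, coe_fourierBasis]
    simpa using hv n
  simpa using (LinearIsometryEquiv.map_eq_zero_iff fourierBasis.repr).mp h0

theorem coe_oneH : ((oneH : Hardy) : L2) = (fourierLp 2 (0 : ℤ) : L2) := rfl
set_option maxHeartbeats 1000000 in
theorem abstract_main (Q S Sd : Hardy →L[ℂ] Hardy)
    (hsym : ∀ a b : Hardy, ⟪Q a, b⟫_ℂ = ⟪a, Q b⟫_ℂ)
    (hid : ∀ a, Q (Q a) = Q a)
    (hquad : ∀ f : Hardy, ⟪Q (S f), S f⟫_ℂ = ⟪Q f, f⟫_ℂ)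
    (hSS : ∀ f g : Hardy, ⟪S f, S g⟫_ℂ = ⟪f, g⟫_ℂ)
    (hadj : ∀ h g : Hardy, ⟪Sd h, g⟫_ℂ = ⟪h, S g⟫_ℂ)
    (hcoeffS : ∀ (n : ℤ) (h : Hardy),
      ⟪(fourierLp 2 n : L2), ((S h : Hardy) : L2)⟫_ℂ
        = ⟪(fourierLp 2 (n - 1) : L2), (h : L2)⟫_ℂ)
    (hcoeffSd : ∀ (n : ℤ), 0 ≤ n → ∀ (h : Hardy),
      ⟪(fourierLp 2 n : L2), ((Sd h : Hardy) : L2)⟫_ℂ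
        = ⟪(fourierLp 2 (n + 1) : L2), (h : L2)⟫_ℂ) :
    Q = 0 ∨ Q = 1 := by
  -- projection helpers
  have P2 : ∀ g : Hardy, ⟪Q g, g⟫_ℂ = 0 → Q g = 0 := by
    intro g hg
    have h1 : ⟪Q g, Q g⟫_ℂ = 0 := by
      rw [hsym g (Q g), hid, ← inner_conj_symm (𝕜 := ℂ) (E := Hardy), hg, map_zero]
    exact inner_self_eq_zero.mp h1
  have P1 : ∀ g : Hardy, ⟪Q g, g⟫_ℂ = ⟪g, g⟫_ℂ → Q g = g := by
    intro g hg
    have e1 : ⟪Q g, Q g⟫_ℂ = ⟪g, g⟫_ℂ := by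
      rw [hsym g (Q g), hid, ← inner_conj_symm (𝕜 := ℂ) (E := Hardy), hg, inner_conj_symm (𝕜 := ℂ) (E := Hardy)]
    have e2 : ⟪g, Q g⟫_ℂ = ⟪g, g⟫_ℂ := by
      rw [← inner_conj_symm (𝕜 := ℂ) (E := Hardy), hg, inner_conj_symm (𝕜 := ℂ) (E := Hardy)]
    have h1 : ⟪Q g - g, Q g - g⟫_ℂ = 0 := by
      rw [inner_sub_left, inner_sub_right, inner_sub_right, e1, e2, hg]
      ring
    exact sub_eq_zero.mp (inner_self_eq_zero.mp h1)
  -- invariance lemmas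
  have hSfix : ∀ f, Q f = f → Q (S f) = S f := by
    intro f hf
    exact P1 _ (by rw [hquad, hf, ← hSS f f])
  have hSker : ∀ f, Q f = 0 → Q (S f) = 0 := by
    intro f hf
    refine P2 _ ?_
    rw [hquad, hf, inner_zero_left]
  have hSdfix : ∀ f, Q f = f → Q (Sd f) = Sd f := by
    intro f hf
    set g : Hardy := Sd f - Q (Sd f) with hg
    have hQg : Q g = 0 := by rw [hg, map_sub, hid, sub_self]
    have h2 : ⟪Sd f, g⟫_ℂ = 0 := by
      rw [hadj, ← hf, hsym, hSker g hQg, inner_zero_right]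
    have h1 : ⟪g, g⟫_ℂ = 0 := by
      rw [hg, inner_sub_left, ← hg, h2, zero_sub, neg_eq_zero, hsym, hQg, inner_zero_right]
    have := (inner_self_eq_zero (𝕜 := ℂ) (E := Hardy)).mp h1
    rw [hg] at this
    exact (sub_eq_zero.mp this).symm
  have hSdker : ∀ f, Q f = 0 → Q (Sd f) = 0 := by
    intro f hf
    set g : Hardy := Q (Sd f) with hg
    have hQg : Q g = g := hid _
    have h1 : ⟪g, g⟫_ℂ = 0 := by
      have e1 : ⟪g, g⟫_ℂ = ⟪Sd f, g⟫_ℂ := by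
        rw [hg, hsym (Sd f) g, ← hg, hQg]
      rw [e1, hadj, ← hSfix g hQg, ← hsym f (S g), hf, inner_zero_left]
    exact inner_self_eq_zero.mp h1
  -- vanishing criterion
  have zeroH : ∀ v : Hardy,
      (∀ n : ℕ, ⟪(fourierLp 2 (n : ℤ) : L2), (v : L2)⟫_ℂ = 0) → v = 0 := by
    intro v hv
    have hv2 : (v : L2) = 0 := by
      refine eq_zero_of_forall_inner_fourier _ fun n => ?_
      rcases lt_or_ge n 0 with hn | hn
      · exact v.2 n hn
      · obtain ⟨m, rfl⟩ := Int.eq_ofNat_of_zero_le hn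
        exact hv m
    exact Subtype.ext hv2
  by_cases hc : ∀ f : Hardy, Q f = f → ⟪((oneH : Hardy) : L2), (f : L2)⟫_ℂ = 0
  · left
    have key : ∀ (n : ℕ) (f : Hardy), Q f = f →
        ⟪(fourierLp 2 (n : ℤ) : L2), (f : L2)⟫_ℂ = 0 := by
      intro n
      induction n with
      | zero => intro f hf; exact hc f hf
      | succ n ih =>
        intro f hf
        have h2 := ih (Sd f) (hSdfix f hf)
        rw [hcoeffSd (n : ℤ) (by positivity) f] at h2
        rw [show ((n + 1 : ℕ) : ℤ) = (n : ℤ) + 1 by push_cast; ring]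
        exact h2
    refine ContinuousLinearMap.ext fun x => ?_
    rw [ContinuousLinearMap.zero_apply]
    exact zeroH _ (fun n => key n (Q x) (hid x))
  · right
    push_neg at hc
    obtain ⟨f, hf, hne⟩ := hc
    set c : ℂ := ⟪((oneH : Hardy) : L2), (f : L2)⟫_ℂ with hcdef
    have claim : f - S (Sd f) = c • oneH := by
      have hz : f - S (Sd f) - c • oneH = 0 := by
        refine zeroH _ fun n => ?_
        have hcoe : ((f - S (Sd f) - c • oneH : Hardy) : L2)
            = (f : L2) - ((S (Sd f) : Hardy) : L2) - c • ((oneH : Hardy) : L2) := by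
          rw [AddSubgroupClass.coe_sub, AddSubgroupClass.coe_sub, SetLike.val_smul]
        rw [hcoe, inner_sub_right, inner_sub_right, inner_smul_right]
        rcases Nat.eq_zero_or_pos n with hn | hn
        · subst hn
          have h1 : ⟪(fourierLp 2 ((0 : ℕ) : ℤ) : L2), ((S (Sd f) : Hardy) : L2)⟫_ℂ = 0 := by
            rw [hcoeffS]
            exact (Sd f).2 _ (by norm_num)
          have h2 : ⟪(fourierLp 2 ((0 : ℕ) : ℤ) : L2), ((oneH : Hardy) : L2)⟫_ℂ = 1 := by
            rw [coe_oneH, Nat.cast_zero,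
              orthonormal_iff_ite.mp orthonormal_fourier (0 : ℤ) 0, if_pos rfl]
          have h3 : c = ⟪(fourierLp 2 ((0 : ℕ) : ℤ) : L2), (f : L2)⟫_ℂ := by
            rw [hcdef, coe_oneH, Nat.cast_zero]
          rw [h1, h2, h3]
          ring
        · have h1 : ⟪(fourierLp 2 (n : ℤ) : L2), ((S (Sd f) : Hardy) : L2)⟫_ℂ
              = ⟪(fourierLp 2 (n : ℤ) : L2), (f : L2)⟫_ℂ := by
            rw [hcoeffS, hcoeffSd ((n : ℤ) - 1) (by omega)]
            norm_num
          have h2 : ⟪(fourierLp 2 (n : ℤ) : L2), ((oneH : Hardy) : L2)⟫_ℂ = 0 := by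
            rw [coe_oneH, orthonormal_iff_ite.mp orthonormal_fourier (n : ℤ) 0,
              if_neg (by omega)]
          rw [h1, h2]
          ring
      exact sub_eq_zero.mp hz
    have hone : Q oneH = oneH := by
      have h1 : Q (f - S (Sd f)) = f - S (Sd f) := by
        rw [map_sub, hf, hSfix _ (hSdfix f hf)]
      rw [claim, _root_.map_smul] at h1
      exact smul_right_injective _ hne h1
    have hen : ∀ n : ℕ, ∃ g : Hardy, Q g = g ∧ (g : L2) = (fourierLp 2 (n : ℤ) : L2) := by
      intro n
      induction n with
      | zero => exact ⟨oneH, hone, by rw [coe_oneH, Nat.cast_zero]⟩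
      | succ n ih =>
        obtain ⟨g, hg, hcoe⟩ := ih
        refine ⟨S g, hSfix g hg, ?_⟩
        have h4 : ∀ m : ℤ, ⟪(fourierLp 2 m : L2), ((S g : Hardy) : L2)⟫_ℂ
            = ⟪(fourierLp 2 m : L2), (fourierLp 2 ((n : ℤ) + 1) : L2)⟫_ℂ := by
          intro m
          rw [hcoeffS, hcoe,
            orthonormal_iff_ite.mp orthonormal_fourier (m - 1) (n : ℤ),
            orthonormal_iff_ite.mp orthonormal_fourier m ((n : ℤ) + 1)]
          by_cases hmn : m = (n : ℤ) + 1
          · rw [if_pos (by omega), if_pos hmn]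
          · rw [if_neg (by omega), if_neg hmn]
        have h5 : ((S g : Hardy) : L2) - (fourierLp 2 ((n : ℤ) + 1) : L2) = 0 := by
          refine eq_zero_of_forall_inner_fourier _ fun m => ?_
          rw [inner_sub_right, h4 m, sub_self]
        rw [sub_eq_zero.mp h5]
        norm_num
    refine ContinuousLinearMap.ext fun x => ?_
    rw [ContinuousLinearMap.one_apply]
    have hu : Q (x - Q x) = 0 := by rw [map_sub, hid, sub_self]
    have hx0 : x - Q x = 0 := by
      refine zeroH _ fun n => ?_
      obtain ⟨g, hg, hcoe⟩ := hen n
      rw [← hcoe, ← Submodule.coe_inner, ← hg, hsym, hu, inner_zero_right]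
    exact (sub_eq_zero.mp hx0).symm

/-- A Toeplitz operator which is an orthogonal projection is `0` or the identity. -/
theorem toeplitz_projection_trivial (φ : Linf) (h : IsOrthoProj (Toep φ)) :
    Toep φ = 0 ∨ Toep φ = 1 := by
  obtain ⟨hsa, hidem⟩ := h
  refine abstract_main (Toep φ) (Toep zL) (Toep zbarL)
    (fun a b => hsa.isSymmetric a b)
    (fun a => by rw [← ContinuousLinearMap.comp_apply, hidem])
    (quad_eq φ) S_inner_S Sd_adjoint
    (fun n h => coeff_S_succ n h)
    (fun n hn h => coeff_Sd n hn h)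

end ToeplitzProj
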